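/- arXiv:1412.6160 — 5 statements merged into one kernel-verified Lean document; each statement's English description precedes it below -/
import Mathlib

section
/- Let F, G be complex matrices of the same size with FF* = GG*. Then there exists a unitary matrix U such that F = GU. -/
open Matrix

lemma toEuclideanLin_mul_aux {l m n : ℕ} (M : Matrix (Fin l) (Fin m) ℂ)
    (N : Matrix (Fin m) (Fin n) ℂ) :
    Matrix.toEuclideanLin (M * N)
      = (Matrix.toEuclideanLin M).comp (Matrix.toEuclideanLin N) := by
  simp only [Matrix.toEuclideanLin_eq_toLin]
  exact Matrix.toLin_mul _ (PiLp.basisFun 2 ℂ (Fin m)) _ M N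

/-- If `F Fᴴ = G Gᴴ` then there is a unitary `U` with `F = G * U`. -/
theorem exists_unitary_of_mul_conjTranspose_eq
    (p q : ℕ) (F G : Matrix (Fin p) (Fin q) ℂ)
    (h : F * Fᴴ = G * Gᴴ) :
    ∃ U : Matrix (Fin q) (Fin q) ℂ,
      U ∈ Matrix.unitaryGroup (Fin q) ℂ ∧ F = G * U := by
  classical
  set f := Matrix.toEuclideanLin Fᴴ with hf
  set g := Matrix.toEuclideanLin Gᴴ with hg
  have hadj : ∀ (M : Matrix (Fin p) (Fin q) ℂ) (x : EuclideanSpace ℂ (Fin p)),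
      (inner ℂ (Matrix.toEuclideanLin Mᴴ x) (Matrix.toEuclideanLin Mᴴ x) : ℂ)
        = inner ℂ x (Matrix.toEuclideanLin (M * Mᴴ) x) := by
    intro M x
    have h2 : Matrix.toEuclideanLin M = LinearMap.adjoint (Matrix.toEuclideanLin Mᴴ) := by
      rw [← Matrix.toEuclideanLin_conjTranspose_eq_adjoint, conjTranspose_conjTranspose]
    rw [toEuclideanLin_mul_aux, LinearMap.comp_apply, h2, LinearMap.adjoint_inner_right]
  have key : ∀ x, (inner ℂ (f x) (f x) : ℂ) = inner ℂ (g x) (g x) := by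
    intro x; rw [hf, hg, hadj F x, hadj G x, h]
  have hnorm : ∀ x, ‖f x‖ = ‖g x‖ := by
    intro x
    rw [@norm_eq_sqrt_re_inner ℂ, @norm_eq_sqrt_re_inner ℂ, key]
  have hker : LinearMap.ker g ≤ LinearMap.ker f := by
    intro x hx
    rw [LinearMap.mem_ker] at hx ⊢
    have hx2 := hnorm x
    rw [hx, norm_zero, norm_eq_zero] at hx2
    exact hx2
  let L' : LinearMap.range g →ₗ[ℂ] EuclideanSpace ℂ (Fin q) :=
    ((LinearMap.ker g).liftQ f hker).comp g.quotKerEquivRange.symm.toLinearMap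
  have hL' : ∀ x, L' ⟨g x, LinearMap.mem_range_self g x⟩ = f x := by
    intro x
    simp only [L', LinearMap.comp_apply, LinearEquiv.coe_coe]
    rw [g.quotKerEquivRange_symm_apply_image x]
    simp
  have hLnorm : ∀ s : LinearMap.range g, ‖L' s‖ = ‖s‖ := by
    rintro ⟨s, x, rfl⟩
    rw [show (⟨g x, ⟨x, rfl⟩⟩ : LinearMap.range g)
        = ⟨g x, LinearMap.mem_range_self g x⟩ from rfl, hL' x]
    exact hnorm x
  let L : LinearMap.range g →ₗᵢ[ℂ] EuclideanSpace ℂ (Fin q) := ⟨L', hLnorm⟩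
  let W := L.extend
  have hWg : ∀ x, W (g x) = f x := by
    intro x
    have h1 := L.extend_apply ⟨g x, LinearMap.mem_range_self g x⟩
    have h2 := hL' x
    exact h1.trans h2
  let A : Matrix (Fin q) (Fin q) ℂ := Matrix.toEuclideanLin.symm W.toLinearMap
  have hA : Matrix.toEuclideanLin A = W.toLinearMap :=
    Matrix.toEuclideanLin.apply_symm_apply _
  have hAG : A * Gᴴ = Fᴴ := by
    apply Matrix.toEuclideanLin.injective
    rw [toEuclideanLin_mul_aux, hA]
    exact LinearMap.ext hWg
  have hcol : ∀ (i k : Fin q), W (EuclideanSpace.single i 1) k = A k i := by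
    intro i k
    have hx : W (EuclideanSpace.single i 1)
        = Matrix.toEuclideanLin A (EuclideanSpace.single i 1) :=
      (DFunLike.congr_fun hA (EuclideanSpace.single i 1)).symm
    rw [hx, Matrix.toEuclideanLin_apply, PiLp.toLp_apply]
    simp [Matrix.mulVec, dotProduct, EuclideanSpace.single_apply]
  have hUA : A ∈ Matrix.unitaryGroup (Fin q) ℂ := by
    rw [Matrix.mem_unitaryGroup_iff']
    ext i j
    have h1 : (star A * A) i j
        = (inner ℂ (W (EuclideanSpace.single i 1)) (W (EuclideanSpace.single j 1)) : ℂ) := by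
      simp only [PiLp.inner_apply, RCLike.inner_apply, hcol, Matrix.mul_apply,
        Matrix.star_apply, Matrix.star_eq_conjTranspose, Matrix.conjTranspose_apply,
        RCLike.star_def]
      exact Finset.sum_congr rfl (fun _ _ => mul_comm _ _)
    rw [h1, W.inner_map_map]
    simp only [PiLp.inner_apply, RCLike.inner_apply, EuclideanSpace.single_apply,
      apply_ite (starRingEnd ℂ), _root_.map_one, map_zero, ite_mul, one_mul, zero_mul,
      Matrix.one_apply]
    by_cases hij : i = j
    · subst hij; simp
    · simp [hij, Ne.symm hij, Matrix.one_apply]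
  refine ⟨Aᴴ, ?_, ?_⟩
  · rw [Matrix.mem_unitaryGroup_iff, Matrix.star_eq_conjTranspose,
      Matrix.conjTranspose_conjTranspose]
    exact Matrix.mem_unitaryGroup_iff'.mp hUA
  · have h2 := congrArg Matrix.conjTranspose hAG
    rw [Matrix.conjTranspose_mul, Matrix.conjTranspose_conjTranspose,
      Matrix.conjTranspose_conjTranspose] at h2
    exact h2.symm
end

section
/- Let V ∈ ℂ^{(n+m)×(n+m)} be positive semidefinite and satisfy [I_n 0] V [I_n 0]* = [A B] V [A B]* for given A ∈ ℂ^{n×n}, B ∈ ℂ^{n×m}. Then there exist finitely many positive semidefinite rank-one matrices V_k with V = Σ_k V_k and [I_n 0] V_k [I_n 0]* = [A B] V_k [A B]* for each k. -/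
open Matrix LinearMap Module
open scoped ComplexOrder MatrixOrder

noncomputable section

variable {F E : Type} [NormedAddCommGroup E] [InnerProductSpace ℂ E]
  [NormedAddCommGroup F] [InnerProductSpace ℂ F]

local notation "⟪" x ", " y "⟫" => @inner ℂ _ _ x y

lemma aux_exists_isometry [FiniteDimensional ℂ E]
    (f g : F →ₗ[ℂ] E) (h : ∀ v, ‖f v‖ = ‖g v‖) :
    ∃ U : E →ₗᵢ[ℂ] E, ∀ v, U (f v) = g v := by
  have hker : LinearMap.ker f = LinearMap.ker g := by
    ext x
    rw [LinearMap.mem_ker, LinearMap.mem_ker, ← norm_eq_zero, h, norm_eq_zero]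
  let ψ : (LinearMap.range f) ≃ₗ[ℂ] (LinearMap.range g) :=
    f.quotKerEquivRange.symm.trans ((Submodule.quotEquivOfEq _ _ hker).trans g.quotKerEquivRange)
  have hψ : ∀ v : F, (ψ ⟨f v, LinearMap.mem_range_self f v⟩ : E) = g v := by
    intro v
    have h1 : f.quotKerEquivRange.symm ⟨f v, LinearMap.mem_range_self f v⟩ =
        Submodule.Quotient.mk v := by
      rw [LinearEquiv.symm_apply_eq]
      exact Subtype.ext (f.quotKerEquivRange_apply_mk v).symm
    show ((f.quotKerEquivRange.symm.trans
        ((Submodule.quotEquivOfEq _ _ hker).trans g.quotKerEquivRange))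
        ⟨f v, LinearMap.mem_range_self f v⟩ : E) = g v
    rw [LinearEquiv.trans_apply, h1, LinearEquiv.trans_apply, Submodule.quotEquivOfEq_mk]
    exact g.quotKerEquivRange_apply_mk v
  let L : (LinearMap.range f) →ₗᵢ[ℂ] E :=
    ⟨(LinearMap.range g).subtype ∘ₗ ψ.toLinearMap, by
      rintro ⟨x, v, rfl⟩
      show ‖(ψ ⟨f v, LinearMap.mem_range_self f v⟩ : E)‖ = _
      rw [hψ v]
      exact (h v).symm⟩
  refine ⟨L.extend, fun v => ?_⟩
  have := L.extend_apply ⟨f v, LinearMap.mem_range_self f v⟩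
  rw [this]
  show ((LinearMap.range g).subtype ∘ₗ ψ.toLinearMap) _ = g v
  simpa using hψ v

lemma aux_exists_pair [FiniteDimensional ℂ E] [FiniteDimensional ℂ F] [Nontrivial E]
    (p q : E →ₗ[ℂ] F) (h : ∀ v, ‖LinearMap.adjoint p v‖ = ‖LinearMap.adjoint q v‖) :
    ∃ (s : E) (ω : ℂ), s ≠ 0 ∧ ‖ω‖ = 1 ∧ q s = ω • p s := by
  obtain ⟨U, hU⟩ := aux_exists_isometry (LinearMap.adjoint p) (LinearMap.adjoint q) h
  set u : E →ₗ[ℂ] E := U.toLinearMap with hu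
  have hcomp : u ∘ₗ LinearMap.adjoint p = LinearMap.adjoint q := by
    ext v; exact hU v
  have hq : q = p ∘ₗ LinearMap.adjoint u := by
    have := congrArg LinearMap.adjoint hcomp
    rw [LinearMap.adjoint_comp, LinearMap.adjoint_adjoint, LinearMap.adjoint_adjoint] at this
    exact this.symm
  obtain ⟨ω, hω⟩ := Module.End.exists_eigenvalue (LinearMap.adjoint u)
  obtain ⟨s, hs⟩ := hω.exists_hasEigenvector
  have hse : LinearMap.adjoint u s = ω • s := hs.apply_eq_smul
  have hs0 : s ≠ 0 := hs.right
  -- adjoint u ∘ u = 1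
  have h1 : LinearMap.adjoint u ∘ₗ u = LinearMap.id := by
    apply LinearMap.ext; intro x
    apply ext_inner_right ℂ
    intro y
    rw [LinearMap.comp_apply, LinearMap.adjoint_inner_left]
    exact U.inner_map_map x y
  have h2 : u ∘ₗ LinearMap.adjoint u = LinearMap.id := by
    have := mul_eq_one_comm.mp (h1 : (LinearMap.adjoint u) * u = 1)
    exact this
  have hω1 : ‖ω‖ = 1 := by
    have hsu : s = ω • U s := by
      have h3 : (u ∘ₗ LinearMap.adjoint u) s = LinearMap.id s := DFunLike.congr_fun h2 s
      rw [LinearMap.comp_apply, hse, _root_.map_smul, LinearMap.id_apply] at h3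
      exact h3.symm
    have hn : ‖s‖ = ‖ω‖ * ‖s‖ := by
      conv_lhs => rw [hsu]
      rw [norm_smul, U.norm_map]
    have hns : ‖s‖ ≠ 0 := norm_ne_zero_iff.mpr hs0
    have : ‖ω‖ * ‖s‖ = 1 * ‖s‖ := by rw [one_mul]; exact hn.symm
    exact mul_right_cancel₀ hns this
  refine ⟨s, ω, hs0, hω1, ?_⟩
  rw [hq, LinearMap.comp_apply, hse, _root_.map_smul]

set_option maxHeartbeats 2000000 in
lemma aux_resolution [FiniteDimensional ℂ F] :
    ∀ (d : ℕ) (E : Type) (_ : NormedAddCommGroup E) (_ : InnerProductSpace ℂ E)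
      (_ : FiniteDimensional ℂ E), finrank ℂ E = d →
      ∀ (p q : E →ₗ[ℂ] F), (∀ v, ‖LinearMap.adjoint p v‖ = ‖LinearMap.adjoint q v‖) →
      ∃ (s : Fin d → E) (ω : Fin d → ℂ),
        (∀ x : E, ∑ k, (inner ℂ (s k) x : ℂ) • s k = x) ∧
        ∀ k, ‖ω k‖ = 1 ∧ q (s k) = ω k • p (s k) := by
  intro d
  induction d with
  | zero =>
    intro E _ _ _ hd p q h
    have hss : Subsingleton E := finrank_zero_iff.mp hd
    refine ⟨fun k => k.elim0, fun k => k.elim0, fun x => ?_, fun k => k.elim0⟩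
    simp only [Finset.univ_eq_empty, Finset.sum_empty]
    exact (Subsingleton.elim _ _)
  | succ d ih =>
    intro E _ _ _ hd p q h
    haveI : Nontrivial E := by
      apply Module.nontrivial_of_finrank_pos (R := ℂ)
      omega
    obtain ⟨s₀, ω₀, hs0, hω0, hqs⟩ := aux_exists_pair p q h
    set t : E := (‖s₀‖ : ℂ)⁻¹ • s₀ with htdef
    have ht1 : ‖t‖ = 1 := norm_smul_inv_norm hs0
    have ht0 : t ≠ 0 := by
      intro hle; rw [hle, norm_zero] at ht1; norm_num at ht1
    have hqt : q t = ω₀ • p t := by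
      rw [htdef, _root_.map_smul, _root_.map_smul, hqs, smul_comm]
    set E' : Submodule ℂ E := (ℂ ∙ t)ᗮ with hE'def
    have hfr : finrank ℂ E' = d := by
      have h1 : finrank ℂ (ℂ ∙ t) = 1 := finrank_span_singleton ht0
      have h2 := Submodule.finrank_add_finrank_orthogonal (K := (ℂ ∙ t)) (𝕜 := ℂ) (E := E)
      rw [h1, hd, ← hE'def] at h2
      omega
    set p' : E' →ₗ[ℂ] F := p ∘ₗ E'.subtype with hp'def
    set q' : E' →ₗ[ℂ] F := q ∘ₗ E'.subtype with hq'def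
    -- adjoint formula
    have hadj : ∀ r : E →ₗ[ℂ] F, LinearMap.adjoint (r ∘ₗ E'.subtype) =
        (Submodule.orthogonalProjectionOnto E').toLinearMap ∘ₗ LinearMap.adjoint r := by
      intro r
      symm
      rw [LinearMap.eq_adjoint_iff]
      intro x y
      rw [LinearMap.comp_apply, LinearMap.comp_apply]
      have hcoe : (inner ℂ ((Submodule.orthogonalProjectionOnto E') (LinearMap.adjoint r x)) y : ℂ) =
          inner ℂ (((Submodule.orthogonalProjectionOnto E') (LinearMap.adjoint r x) : E)) (y : E) := rfl
      rw [ContinuousLinearMap.coe_coe, hcoe]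
      have hz : (inner ℂ ((LinearMap.adjoint r x : E) -
          ((Submodule.orthogonalProjectionOnto E') (LinearMap.adjoint r x) : E)) (y : E) : ℂ) = 0 := by
        have hmem := Submodule.sub_starProjection_mem_orthogonal (K := E')
          (LinearMap.adjoint r x)
        exact (Submodule.mem_orthogonal' _ _).mp hmem _ y.2
      have := inner_sub_left (𝕜 := ℂ) (LinearMap.adjoint r x)
        (((Submodule.orthogonalProjectionOnto E') (LinearMap.adjoint r x) : E)) (y : E)
      rw [hz] at this
      have h4 : (inner ℂ (((Submodule.orthogonalProjectionOnto E') (LinearMap.adjoint r x) : E)) (y : E) : ℂ) =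
          inner ℂ (LinearMap.adjoint r x) (y : E) := by
        have := sub_eq_zero.mp this.symm
        linear_combination -this
      rw [h4, LinearMap.adjoint_inner_left]
      rfl
    -- norm hypothesis for restricted maps
    have hnorm' : ∀ v, ‖LinearMap.adjoint p' v‖ = ‖LinearMap.adjoint q' v‖ := by
      intro v
      rw [hp'def, hq'def, hadj p, hadj q]
      simp only [LinearMap.comp_apply, ContinuousLinearMap.coe_coe]
      have key : ∀ r : E →ₗ[ℂ] F, (‖(Submodule.orthogonalProjectionOnto E') (LinearMap.adjoint r v)‖ : ℝ) ^ 2 =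
          ‖LinearMap.adjoint r v‖ ^ 2 - ‖(inner ℂ t (LinearMap.adjoint r v) : ℂ)‖ ^ 2 := by
        intro r
        have hP := Submodule.norm_sq_eq_add_norm_sq_projection (LinearMap.adjoint r v) (ℂ ∙ t)
        have hsing : ((Submodule.orthogonalProjectionOnto (ℂ ∙ t)) (LinearMap.adjoint r v) : E) =
            (inner ℂ t (LinearMap.adjoint r v) : ℂ) • t := by
          rw [Submodule.coe_orthogonalProjectionOnto_apply, Submodule.starProjection_singleton, ht1]
          norm_num
        have hnsing : ‖(Submodule.orthogonalProjectionOnto (ℂ ∙ t)) (LinearMap.adjoint r v)‖ =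
            ‖(inner ℂ t (LinearMap.adjoint r v) : ℂ)‖ := by
          have : ‖(Submodule.orthogonalProjectionOnto (ℂ ∙ t)) (LinearMap.adjoint r v)‖ =
              ‖((Submodule.orthogonalProjectionOnto (ℂ ∙ t)) (LinearMap.adjoint r v) : E)‖ := rfl
          rw [this, hsing, norm_smul, ht1, mul_one]
        rw [hnsing] at hP
        have hP' : ‖LinearMap.adjoint r v‖ ^ 2 =
            ‖(inner ℂ t (LinearMap.adjoint r v) : ℂ)‖ ^ 2 +
            ‖(Submodule.orthogonalProjectionOnto E') (LinearMap.adjoint r v)‖ ^ 2 := hP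
        linarith
      have hip : ‖(inner ℂ t (LinearMap.adjoint p v) : ℂ)‖ = ‖(inner ℂ t (LinearMap.adjoint q v) : ℂ)‖ := by
        have e1 : (inner ℂ t (LinearMap.adjoint p v) : ℂ) = starRingEnd ℂ (inner ℂ v (p t)) := by
          rw [← inner_conj_symm, LinearMap.adjoint_inner_left]
        have e2 : (inner ℂ t (LinearMap.adjoint q v) : ℂ) = starRingEnd ℂ (inner ℂ v (q t)) := by
          rw [← inner_conj_symm, LinearMap.adjoint_inner_left]
        rw [e1, e2, hqt, inner_smul_right]
        simp only [RCLike.norm_conj, norm_mul, hω0, one_mul]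
      have h1 := key p
      have h2 := key q
      rw [h, hip] at h1
      have hsq := h1.trans h2.symm
      have ha := norm_nonneg ((Submodule.orthogonalProjectionOnto E') (LinearMap.adjoint p v))
      have hb := norm_nonneg ((Submodule.orthogonalProjectionOnto E') (LinearMap.adjoint q v))
      apply le_antisymm
      · nlinarith
      · nlinarith
    obtain ⟨s', ω', hcomp', hk'⟩ := ih E' _ _ _ hfr p' q' hnorm'
    refine ⟨Fin.cons t (fun k => (s' k : E)), Fin.cons ω₀ ω', ?_, ?_⟩
    · intro x
      rw [Fin.sum_univ_succ]
      simp only [Fin.cons_zero, Fin.cons_succ]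
      have claim1 : ∀ k, (inner ℂ ((s' k : E)) x : ℂ) =
          inner ℂ (s' k) ((Submodule.orthogonalProjectionOnto E') x) := by
        intro k
        have hsub : (inner ℂ ((s' k : E)) (x - ((Submodule.orthogonalProjectionOnto E') x : E)) : ℂ) = 0 := by
          have hmem := Submodule.sub_starProjection_mem_orthogonal (K := E') x
          exact hmem _ (s' k).2
        have hexp := inner_sub_right (𝕜 := ℂ) ((s' k : E)) x (((Submodule.orthogonalProjectionOnto E') x : E))
        rw [hsub] at hexp
        have : (inner ℂ ((s' k : E)) x : ℂ) =
            inner ℂ ((s' k : E)) (((Submodule.orthogonalProjectionOnto E') x : E)) := by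
          linear_combination -hexp
        rw [this]
        rfl
      have claim2 : ∑ k, (inner ℂ ((s' k : E)) x : ℂ) • (s' k : E) =
          (((Submodule.orthogonalProjectionOnto E') x : E)) := by
        have := hcomp' ((Submodule.orthogonalProjectionOnto E') x)
        have hc := congrArg (Submodule.subtype E') this
        rw [map_sum] at hc
        simp only [Submodule.subtype_apply] at hc
        calc ∑ k, (inner ℂ ((s' k : E)) x : ℂ) • (s' k : E)
            = ∑ k, (((inner ℂ (s' k) ((Submodule.orthogonalProjectionOnto E') x) : ℂ) • (s' k) : E') : E) := by
              refine Finset.sum_congr rfl fun k _ => ?_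
              rw [claim1 k]
              rfl
          _ = _ := hc
      have claim3 : (inner ℂ t x : ℂ) • t = ((Submodule.orthogonalProjectionOnto (ℂ ∙ t)) x : E) := by
        rw [Submodule.coe_orthogonalProjectionOnto_apply, Submodule.starProjection_singleton, ht1]
        norm_num
      rw [claim2, claim3]
      exact Submodule.starProjection_add_starProjection_orthogonal (K := ℂ ∙ t) x
    · intro k
      refine Fin.cases ?_ ?_ k
      · simp only [Fin.cons_zero]
        exact ⟨hω0, hqt⟩
      · intro j
        simp only [Fin.cons_succ]
        exact (hk' j)

section MatrixAux

variable {ι κ : Type} [Fintype ι] [Fintype κ] [DecidableEq ι]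

lemma aux_mul_vecMulVec (M : Matrix κ ι ℂ) (u : ι → ℂ) (v : ι → ℂ) :
    M * vecMulVec u v = Matrix.of (fun i j => (M *ᵥ u) i * v j) := by
  ext i j
  simp only [Matrix.mul_apply, vecMulVec_apply, Matrix.of_apply, Matrix.mulVec, dotProduct,
    Finset.sum_mul]
  exact Finset.sum_congr rfl fun k _ => by ring

lemma aux_outer_conj (M : Matrix κ ι ℂ) (y : ι → ℂ) :
    M * vecMulVec y (star y) * Mᴴ = vecMulVec (M *ᵥ y) (star (M *ᵥ y)) := by
  ext i j
  rw [aux_mul_vecMulVec]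
  simp only [Matrix.mul_apply, Matrix.of_apply, vecMulVec_apply, Matrix.conjTranspose_apply,
    Pi.star_apply, Matrix.mulVec, dotProduct]
  rw [star_sum, Finset.mul_sum]
  exact Finset.sum_congr rfl fun k _ => by
    simp only [star_mul']
    ring

lemma aux_outer_posSemidef (y : ι → ℂ) : (vecMulVec y (star y)).PosSemidef := by
  constructor
  · ext i j
    simp only [Matrix.conjTranspose_apply, vecMulVec_apply, Pi.star_apply, star_mul', star_star]
    ring
  · exact (Matrix.posSemidef_vecMulVec_self_star y).2


lemma aux_vecMulVec_mulVec (y x : ι → ℂ) :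
    vecMulVec y (star y) *ᵥ x = fun i => y i * (star y ⬝ᵥ x) := by
  funext i
  simp only [Matrix.mulVec, dotProduct, vecMulVec_apply, Pi.star_apply]
  rw [Finset.mul_sum]
  exact Finset.sum_congr rfl fun k _ => by ring

lemma aux_outer_rank (y : ι → ℂ) (hy : y ≠ 0) : (vecMulVec y (star y)).rank = 1 := by
  have hle : (vecMulVec y (star y)).rank ≤ 1 := by
    rw [vecMulVec_eq (Fin 1)]
    refine le_trans (Matrix.rank_mul_le_left _ _) ?_
    exact (Matrix.rank_le_card_width (Matrix.replicateCol (Fin 1) y)).trans (by simp)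
  have hne : (vecMulVec y (star y)).rank ≠ 0 := by
    obtain ⟨i0, hi0⟩ := Function.ne_iff.mp hy
    have hdot : (star y ⬝ᵥ y) ≠ 0 := by
      have hcalc : (star y ⬝ᵥ y) = ((∑ i, Complex.normSq (y i) : ℝ) : ℂ) := by
        push_cast
        simp only [dotProduct, Pi.star_apply, Complex.star_def]
        exact Finset.sum_congr rfl fun k _ => (Complex.normSq_eq_conj_mul_self).symm
      rw [hcalc]
      have hpos : 0 < ∑ i, Complex.normSq (y i) :=
        Finset.sum_pos' (fun i _ => Complex.normSq_nonneg _)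
          ⟨i0, Finset.mem_univ _, by simpa using hi0⟩
      exact_mod_cast hpos.ne'
    intro h0
    have hbot : LinearMap.range (vecMulVec y (star y)).mulVecLin = ⊥ := by
      rw [Matrix.rank] at h0
      exact Submodule.finrank_eq_zero.mp h0
    have : (vecMulVec y (star y)).mulVecLin y = 0 := by
      rw [← Submodule.mem_bot (R := ℂ), ← hbot]
      exact LinearMap.mem_range_self _ y
    rw [Matrix.mulVecLin_apply, aux_vecMulVec_mulVec] at this
    have := congrFun this i0
    simp only [Pi.zero_apply, mul_eq_zero] at this
    tauto
  omega

end MatrixAux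

end

set_option maxHeartbeats 2000000 in
open Module in
/-- Rank one decomposition: a PSD matrix `V` satisfying
`[I 0] V [I 0]ᴴ = [A B] V [A B]ᴴ` decomposes as a finite sum of rank-one PSD
matrices each satisfying the same constraint. -/
theorem rank_one_decomposition
    (n m : ℕ) (A : Matrix (Fin n) (Fin n) ℂ) (B : Matrix (Fin n) (Fin m) ℂ)
    (V : Matrix (Fin n ⊕ Fin m) (Fin n ⊕ Fin m) ℂ)
    (hV : V.PosSemidef)
    (hconstr : (Matrix.fromCols (1 : Matrix (Fin n) (Fin n) ℂ) (0 : Matrix (Fin n) (Fin m) ℂ)) * V *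
        (Matrix.fromCols (1 : Matrix (Fin n) (Fin n) ℂ) (0 : Matrix (Fin n) (Fin m) ℂ))ᴴ =
      (Matrix.fromCols A B) * V * (Matrix.fromCols A B)ᴴ) :
    ∃ (K : ℕ) (Vk : Fin K → Matrix (Fin n ⊕ Fin m) (Fin n ⊕ Fin m) ℂ),
      V = ∑ k, Vk k ∧
      ∀ k, (Vk k).PosSemidef ∧ (Vk k).rank = 1 ∧
        (Matrix.fromCols (1 : Matrix (Fin n) (Fin n) ℂ) (0 : Matrix (Fin n) (Fin m) ℂ)) * Vk k *
            (Matrix.fromCols (1 : Matrix (Fin n) (Fin n) ℂ) (0 : Matrix (Fin n) (Fin m) ℂ))ᴴ =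
          (Matrix.fromCols A B) * Vk k * (Matrix.fromCols A B)ᴴ := by
  classical
  let ι := (Fin n ⊕ Fin m)
  set C : Matrix (Fin n) ι ℂ := Matrix.fromCols (1 : Matrix (Fin n) (Fin n) ℂ) 0 with hC
  set D : Matrix (Fin n) ι ℂ := Matrix.fromCols A B with hD
  set X : Matrix ι ι ℂ := CFC.sqrt V with hXdef
  have hXX : X * X = V := CFC.sqrt_mul_sqrt_self V hV.nonneg
  have hXH : Xᴴ = X := (CFC.sqrt_nonneg V).posSemidef.1
  have hMV : ∀ M : Matrix (Fin n) ι ℂ, (M * X) * (M * X)ᴴ = M * V * Mᴴ := by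
    intro M
    rw [Matrix.conjTranspose_mul, hXH, Matrix.mul_assoc M X (X * Mᴴ),
      ← Matrix.mul_assoc X X Mᴴ, hXX, ← Matrix.mul_assoc]
  have hPQ : (C * X) * (C * X)ᴴ = (D * X) * (D * X)ᴴ := by
    rw [hMV, hMV]; exact hconstr
  set p := Matrix.toEuclideanLin (C * X) with hp
  set q := Matrix.toEuclideanLin (D * X) with hq
  have tEL_mul : ∀ (M : Matrix (Fin n) ι ℂ) (N : Matrix ι (Fin n) ℂ),
      Matrix.toEuclideanLin (M * N) =
        (Matrix.toEuclideanLin M) ∘ₗ (Matrix.toEuclideanLin N) := by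
    intro M N
    rw [Matrix.toEuclideanLin_eq_toLin, Matrix.toLin_mul _ (PiLp.basisFun 2 ℂ ι) _ M N]
    rfl
  have hnorm : ∀ v, ‖LinearMap.adjoint p v‖ = ‖LinearMap.adjoint q v‖ := by
    intro v
    have hadj_p : LinearMap.adjoint p = Matrix.toEuclideanLin (C * X)ᴴ :=
      (Matrix.toEuclideanLin_conjTranspose_eq_adjoint _).symm
    have hadj_q : LinearMap.adjoint q = Matrix.toEuclideanLin (D * X)ᴴ :=
      (Matrix.toEuclideanLin_conjTranspose_eq_adjoint _).symm
    have key : (inner ℂ (LinearMap.adjoint p v) (LinearMap.adjoint p v) : ℂ) =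
        inner ℂ (LinearMap.adjoint q v) (LinearMap.adjoint q v) := by
      rw [LinearMap.adjoint_inner_left, LinearMap.adjoint_inner_left]
      rw [hadj_p, hadj_q]
      have e1 : p (Matrix.toEuclideanLin (C * X)ᴴ v) =
          Matrix.toEuclideanLin ((C * X) * (C * X)ᴴ) v := by
        rw [tEL_mul]; rfl
      have e2 : q (Matrix.toEuclideanLin (D * X)ᴴ v) =
          Matrix.toEuclideanLin ((D * X) * (D * X)ᴴ) v := by
        rw [tEL_mul]; rfl
      rw [e1, e2, hPQ]
    rw [inner_self_eq_norm_sq_to_K, inner_self_eq_norm_sq_to_K] at key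
    have key' : (‖LinearMap.adjoint p v‖ : ℝ) ^ 2 = ‖LinearMap.adjoint q v‖ ^ 2 := by
      exact_mod_cast key
    have h1 := norm_nonneg (LinearMap.adjoint p v)
    have h2 := norm_nonneg (LinearMap.adjoint q v)
    nlinarith
  have hfr : finrank ℂ (EuclideanSpace ℂ ι) = n + m := by
    rw [finrank_euclideanSpace]
    show Fintype.card (Fin n ⊕ Fin m) = n + m
    simp
  obtain ⟨s, ω, hcomp, hk⟩ := aux_resolution (n + m) (EuclideanSpace ℂ ι) _ _ _ hfr p q hnorm
  set sv : Fin (n + m) → (ι → ℂ) := fun k => WithLp.equiv 2 (ι → ℂ) (s k) with hsv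
  set y : Fin (n + m) → (ι → ℂ) := fun k => X *ᵥ sv k with hy
  set W : Fin (n + m) → Matrix ι ι ℂ := fun k => vecMulVec (y k) (star (y k)) with hW
  -- per-k mulVec relation
  have hDy : ∀ k, D *ᵥ y k = ω k • (C *ᵥ y k) := by
    intro k
    have h2 := congrArg (WithLp.equiv 2 (Fin n → ℂ)) (hk k).2
    rw [WithLp.equiv_apply, WithLp.equiv_apply, WithLp.ofLp_smul] at h2
    rw [hp, hq] at h2
    rw [Matrix.ofLp_toEuclideanLin_apply, Matrix.ofLp_toEuclideanLin_apply] at h2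
    rw [← Matrix.mulVec_mulVec, ← Matrix.mulVec_mulVec] at h2
    exact h2
  -- sum identity
  have hsum : V = ∑ k, W k := by
    ext i j
    rw [Matrix.sum_apply]
    set c : ι → EuclideanSpace ℂ ι :=
      fun i0 => (WithLp.equiv 2 (ι → ℂ)).symm (fun l => star (X i0 l)) with hc
    have hcinner : ∀ (i0 : ι) (x : EuclideanSpace ℂ ι),
        (inner ℂ (c i0) x : ℂ) = (X *ᵥ (WithLp.equiv 2 (ι → ℂ) x)) i0 := by
      intro i0 x
      simp only [hc, PiLp.inner_apply, RCLike.inner_apply, WithLp.equiv_symm_apply, PiLp.toLp_apply,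
        starRingEnd_apply, star_star, Matrix.mulVec, dotProduct]
      exact Finset.sum_congr rfl fun l _ => mul_comm _ _
    have h1 := hcomp (c j)
    have h2 := congrArg (fun z => (inner ℂ (c i) z : ℂ)) h1
    simp only [inner_sum, inner_smul_right] at h2
    have e_ci_sk : ∀ k, (inner ℂ (c i) (s k) : ℂ) = y k i := fun k => hcinner i (s k)
    have e_sk_cj : ∀ k, (inner ℂ (s k) (c j) : ℂ) = star (y k j) := by
      intro k
      rw [← inner_conj_symm, hcinner j (s k)]
      rfl
    have e_cc : (inner ℂ (c i) (c j) : ℂ) = V i j := by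
      rw [hcinner i (c j)]
      have hXlj : ∀ l, X l j = star (X j l) := by
        intro l
        conv_lhs => rw [← hXH]
        rfl
      rw [← hXX]
      simp only [Matrix.mul_apply, Matrix.mulVec, dotProduct]
      refine Finset.sum_congr rfl fun l _ => ?_
      rw [hXlj l]
      rfl
    rw [e_cc] at h2
    rw [← h2]
    refine Finset.sum_congr rfl fun k _ => ?_
    rw [e_ci_sk k, e_sk_cj k]
    show star (y k j) * y k i = vecMulVec (y k) (star (y k)) i j
    rw [vecMulVec_apply]
    exact mul_comm _ _
  -- filter nonzero
  set T : Finset (Fin (n + m)) := Finset.univ.filter (fun k => y k ≠ 0) with hT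
  have hWzero : ∀ k, k ∉ T → W k = 0 := by
    intro k hkT
    have hy0 : y k = 0 := by
      by_contra hne
      exact hkT (Finset.mem_filter.mpr ⟨Finset.mem_univ _, hne⟩)
    show vecMulVec (y k) (star (y k)) = 0
    rw [hy0]
    ext i j
    simp [vecMulVec_apply]
  refine ⟨T.card, fun k0 => W ((T.equivFin.symm k0 : {x // x ∈ T}) : Fin (n + m)), ?_, ?_⟩
  · rw [hsum]
    have e1 : ∑ k0 : Fin T.card, W ((T.equivFin.symm k0 : {x // x ∈ T}) : Fin (n + m)) =
        ∑ a : {x // x ∈ T}, W (a : Fin (n + m)) :=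
      Equiv.sum_comp T.equivFin.symm (fun a : {x // x ∈ T} => W (a : Fin (n + m)))
    have e2 : ∑ a : {x // x ∈ T}, W (a : Fin (n + m)) = ∑ k ∈ T, W k :=
      Finset.sum_coe_sort T W
    have e3 : ∑ k ∈ T, W k = ∑ k, W k :=
      Finset.sum_subset (Finset.subset_univ T) (fun k _ hk => hWzero k hk)
    rw [e1, e2, e3]
  · intro k0
    set a : Fin (n + m) := ((T.equivFin.symm k0 : {x // x ∈ T}) : Fin (n + m)) with hadef
    have haT : a ∈ T := (T.equivFin.symm k0).2
    have hya : y a ≠ 0 := (Finset.mem_filter.mp haT).2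
    refine ⟨aux_outer_posSemidef _, aux_outer_rank _ hya, ?_⟩
    show C * W a * Cᴴ = D * W a * Dᴴ
    show C * vecMulVec (y a) (star (y a)) * Cᴴ = D * vecMulVec (y a) (star (y a)) * Dᴴ
    rw [aux_outer_conj, aux_outer_conj, hDy a]
    have hωa : ω a * star (ω a) = 1 := by
      have h1 := (hk a).1
      rw [Complex.star_def, Complex.mul_conj, Complex.normSq_eq_norm_sq, h1]
      norm_num
    ext i j
    simp only [vecMulVec_apply, Pi.smul_apply, Pi.star_apply, smul_eq_mul, star_mul']
    calc (C *ᵥ y a) i * star ((C *ᵥ y a) j)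
        = (ω a * star (ω a)) * ((C *ᵥ y a) i * star ((C *ᵥ y a) j)) := by rw [hωa, one_mul]
      _ = ω a * (C *ᵥ y a) i * (star ((C *ᵥ y a) j) * star (ω a)) := by ring
      _ = ω a * (C *ᵥ y a) i * (star (ω a) * star ((C *ᵥ y a) j)) := by ring
end

section
/- Let V ⪰ 0 satisfy [I_n 0] V [I_n 0]* = [A B] V [A B]* and Tr([0 I_m] V [0 I_m]*) ≤ 1, where A is Schur stable. If additionally V is rank one, written V = [x; w][x; w]*, then ‖w‖² ≤ 1 and there is θ ∈ ℝ with e^{iθ} x = A x + B w, hence x = (e^{iθ} I − A)^{−1} B w. -/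
open Matrix
open scoped ComplexOrder


lemma key {p q : Type*} [Fintype q] [Fintype p] (M : Matrix p q ℂ) (u : q → ℂ) :
    M * Matrix.vecMulVec u (star u) * Mᴴ = Matrix.vecMulVec (M *ᵥ u) (star (M *ᵥ u)) := by
  ext i j
  simp only [mul_apply, vecMulVec_apply, conjTranspose_apply, mulVec, dotProduct, Pi.star_apply,
    star_sum, star_mul', Finset.sum_mul, Finset.mul_sum]
  apply Finset.sum_congr rfl; intro k _
  apply Finset.sum_congr rfl; intro l _
  ring

lemma phase {k : Type*} (a b : k → ℂ)
    (h : ∀ i j, a i * star (a j) = b i * star (b j)) :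
    ∃ θ : ℝ, Complex.exp (θ * Complex.I) • a = b := by
  simp only [Complex.star_def] at h
  by_cases ha : ∀ i, a i = 0
  · refine ⟨0, funext fun j => ?_⟩
    have h0 := (h j j).symm
    rw [ha j, zero_mul, Complex.mul_conj] at h0
    have : b j = 0 := by
      exact_mod_cast Complex.normSq_eq_zero.mp (by exact_mod_cast h0)
    simp [this, ha j]
  · push_neg at ha
    obtain ⟨i, hi⟩ := ha
    have hii := h i i
    rw [Complex.mul_conj, Complex.mul_conj] at hii
    have hnsq : Complex.normSq (a i) = Complex.normSq (b i) := by exact_mod_cast hii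
    have hbi : b i ≠ 0 := by
      intro hb
      apply hi
      rw [hb, map_zero] at hnsq
      exact Complex.normSq_eq_zero.mp hnsq
    set c : ℂ := b i / a i with hc
    have hcabs : ‖c‖ = 1 := by
      rw [hc, norm_div, Complex.norm_def, Complex.norm_def, hnsq,
        div_self (Real.sqrt_pos.mpr (Complex.normSq_pos.mpr hbi)).ne']
    refine ⟨Complex.arg c, funext fun j => ?_⟩
    have hexp : Complex.exp (Complex.arg c * Complex.I) = c := by
      have := Complex.norm_mul_exp_arg_mul_I c
      rwa [hcabs, Complex.ofReal_one, one_mul] at this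
    simp only [Pi.smul_apply, smul_eq_mul, hexp, hc]
    have hji := h j i
    have hca : (starRingEnd ℂ) (a i) ≠ 0 := by
      simpa using hi
    have hkey : b i * a j = b j * a i := by
      have h1 : a j * (starRingEnd ℂ) (a i) * (b i) = b j * (starRingEnd ℂ) (b i) * b i := by
        rw [hji]
      have h2 : b j * (starRingEnd ℂ) (b i) * b i = b j * a i * (starRingEnd ℂ) (a i) := by
        rw [mul_assoc, mul_comm ((starRingEnd ℂ) (b i)), Complex.mul_conj,
          ← hnsq, ← Complex.mul_conj, mul_assoc, mul_comm (a i)]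
      apply mul_right_cancel₀ hca
      rw [← h2, ← h1]; ring
    rw [← hc, hexp, hc]
    field_simp
    linear_combination hkey

/-- A rank-one feasible point `V = [x; w][x; w]ᴴ` of the SDP satisfies
`‖w‖² ≤ 1` and `e^{iθ} x = Ax + Bw` for some real `θ`, hence
`x = (e^{iθ} I − A)⁻¹ B w`. -/
theorem rank_one_feasible_structure
    (n m : ℕ) (A : Matrix (Fin n) (Fin n) ℂ) (B : Matrix (Fin n) (Fin m) ℂ)
    (hA : ∀ μ ∈ spectrum ℂ A, ‖μ‖ < 1)
    (x : Fin n → ℂ) (w : Fin m → ℂ)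
    (V : Matrix (Fin n ⊕ Fin m) (Fin n ⊕ Fin m) ℂ)
    (hVeq : V = Matrix.vecMulVec (Sum.elim x w) (star (Sum.elim x w)))
    (hV : V.PosSemidef)
    (hconstr : (Matrix.fromCols (1 : Matrix (Fin n) (Fin n) ℂ) (0 : Matrix (Fin n) (Fin m) ℂ)) * V *
        (Matrix.fromCols (1 : Matrix (Fin n) (Fin n) ℂ) (0 : Matrix (Fin n) (Fin m) ℂ))ᴴ =
      (Matrix.fromCols A B) * V * (Matrix.fromCols A B)ᴴ)
    (hpow : ((Matrix.fromCols (0 : Matrix (Fin m) (Fin n) ℂ) (1 : Matrix (Fin m) (Fin m) ℂ)) * V *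
        (Matrix.fromCols (0 : Matrix (Fin m) (Fin n) ℂ) (1 : Matrix (Fin m) (Fin m) ℂ))ᴴ).trace.re ≤ 1) :
    (∑ i, ‖w i‖ ^ 2 ≤ 1) ∧
    ∃ θ : ℝ, Complex.exp (θ * Complex.I) • x = A *ᵥ x + B *ᵥ w ∧
      x = (Complex.exp (θ * Complex.I) • (1 : Matrix (Fin n) (Fin n) ℂ) - A)⁻¹ *ᵥ (B *ᵥ w) := by
  subst hVeq
  rw [key, key] at hconstr
  rw [key] at hpow
  simp only [fromCols_mulVec_sumElim, Matrix.one_mulVec, Matrix.zero_mulVec,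
    add_zero, zero_add] at hconstr hpow
  constructor
  · -- trace bound
    rw [Matrix.trace] at hpow
    simp only [Matrix.diag_apply, vecMulVec_apply, Pi.star_apply, Complex.star_def,
      Complex.mul_conj] at hpow
    calc ∑ i, ‖w i‖ ^ 2 = (∑ i, ((Complex.normSq (w i) : ℂ))).re := by
          simp [Complex.ofReal_re, ← Complex.sq_norm, ← Complex.ofReal_pow]
      _ ≤ 1 := hpow
  · -- phase
    obtain ⟨θ, hθ⟩ := phase x (A *ᵥ x + B *ᵥ w) (by
      intro i j
      have := congrFun (congrFun hconstr i) j
      simpa [vecMulVec_apply] using this)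
    refine ⟨θ, hθ, ?_⟩
    set μ := Complex.exp (θ * Complex.I) with hμ
    have hμabs : ‖μ‖ = 1 := by
      simp [hμ, Complex.norm_exp]
    have hspec : μ ∉ spectrum ℂ A := fun hmem => by
      have := hA μ hmem; rw [hμabs] at this; exact lt_irrefl 1 this
    have hunit : IsUnit (μ • (1 : Matrix (Fin n) (Fin n) ℂ) - A) := by
      have := spectrum.notMem_iff.mp hspec
      rwa [Algebra.algebraMap_eq_smul_one] at this
    set M := μ • (1 : Matrix (Fin n) (Fin n) ℂ) - A with hM
    have hMx : M *ᵥ x = B *ᵥ w := by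
      rw [hM, Matrix.sub_mulVec, Matrix.smul_mulVec, Matrix.one_mulVec]
      have : μ • x = A *ᵥ x + B *ᵥ w := hθ
      rw [this]; abel
    rw [← hMx, Matrix.mulVec_mulVec, Matrix.nonsing_inv_mul _ ((Matrix.isUnit_iff_isUnit_det M).mp hunit), Matrix.one_mulVec]
end

section
/- For the scalar system (A,B,C,D)=(0,0,1,1), the dual problem minimize λ over λ ≥ 0 and real P subject to the 2×2 matrix [[−P + 1, 1],[1, 1 − λ]] ⪯ 0 has infimum 1, but no feasible point (P, λ) attains λ = 1. -/
open Matrix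

lemma psd_entries {P l : ℝ}
    (h : (-(Matrix.of ![![-P + 1, 1], ![1, 1 - l]] : Matrix (Fin 2) (Fin 2) ℝ)).PosSemidef) :
    0 ≤ P - 1 ∧ 0 ≤ l - 1 ∧ ∀ x : Fin 2 → ℝ,
      0 ≤ (P - 1) * (x 0)^2 - 2 * (x 0) * (x 1) + (l - 1) * (x 1)^2 := by
  have key : ∀ x : Fin 2 → ℝ,
      0 ≤ (P - 1) * (x 0)^2 - 2 * (x 0) * (x 1) + (l - 1) * (x 1)^2 := by
    intro x
    have := h.dotProduct_mulVec_nonneg x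
    simp [Matrix.mulVec, dotProduct, Fin.sum_univ_two] at this
    nlinarith [this]
  refine ⟨?_, ?_, key⟩
  · have := key ![1, 0]; simpa using this
  · have := key ![0, 1]; simpa using this

/-- For the scalar system `(A,B,C,D) = (0,0,1,1)`, the dual KYP problem
`min λ` over `λ ≥ 0`, `P ∈ ℝ` with `[[−P+1, 1],[1, 1−λ]] ⪯ 0`
(stated as `−[[−P+1,1],[1,1−λ]] ⪰ 0`) has infimum `1`, but no feasible point
attains `λ = 1`. -/
theorem scalar_example_dual_no_attainment :
    IsGLB {l : ℝ | ∃ P : ℝ, 0 ≤ l ∧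
        (-(Matrix.of ![![-P + 1, 1], ![1, 1 - l]] : Matrix (Fin 2) (Fin 2) ℝ)).PosSemidef} 1 ∧
    ¬ ∃ P : ℝ, 0 ≤ (1 : ℝ) ∧
        (-(Matrix.of ![![-P + 1, 1], ![1, 1 - (1 : ℝ)]] : Matrix (Fin 2) (Fin 2) ℝ)).PosSemidef := by
  constructor
  · constructor
    · -- 1 is a lower bound
      rintro l ⟨P, -, hpsd⟩
      have h := psd_entries hpsd
      linarith [h.2.1]
    · -- greatest lower bound
      intro b hb
      by_contra hb1
      push_neg at hb1
      set l : ℝ := (b + 1) / 2 with hl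
      have hl1 : 1 < l := by simp [hl]; linarith
      have hlb : l < b := by simp [hl]; linarith
      set P : ℝ := 1 + 2 / (l - 1) with hP
      have hε : 0 < l - 1 := by linarith
      have hP1 : P - 1 = 2 / (l - 1) := by simp [hP]
      have hP1pos : 0 < P - 1 := by rw [hP1]; positivity
      have hprod : (P - 1) * (l - 1) = 2 := by
        rw [hP1]; field_simp
      have hmem : l ∈ {l : ℝ | ∃ P : ℝ, 0 ≤ l ∧
          (-(Matrix.of ![![-P + 1, 1], ![1, 1 - l]] : Matrix (Fin 2) (Fin 2) ℝ)).PosSemidef} := by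
        refine ⟨P, by linarith, Matrix.PosSemidef.of_dotProduct_mulVec_nonneg ?_ ?_⟩
        · ext i j
          fin_cases i <;> fin_cases j <;>
            simp [Matrix.conjTranspose, Matrix.neg_apply, Matrix.transpose_apply, Matrix.vecHead, Matrix.vecTail]
        · intro x
          simp only [star_trivial]
          simp [Matrix.mulVec, dotProduct, Fin.sum_univ_two]
          nlinarith [sq_nonneg ((P - 1) * x 0 - x 1), sq_nonneg (x 1), hP1pos,
            mul_pos hP1pos hε, sq_nonneg (x 0)]
      exact absurd (hb hmem) (not_le.mpr hlb)
  · rintro ⟨P, -, hpsd⟩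
    have h := psd_entries hpsd
    have h1 := h.2.2 ![1, P]
    simp at h1
    have h2 := h.1
    nlinarith
end

section
/- Let μ_opt be the optimal value of the SDP: maximize Tr([C D] V [C D]*) over Hermitian positive semidefinite V ∈ ℂ^{(n+m)×(n+m)} with [I 0]V[I 0]* = [A B]V[A B]* and Tr([0 I]V[0 I]*) ≤ 1, where A is Schur stable. Then there exist w ∈ ℂ^m with ‖w‖ ≤ 1 and θ ∈ ℝ such that, with x = (e^{iθ}I − A)^{−1}Bw, one has ‖Cx + Dw‖² = μ_opt. -/
set_option maxHeartbeats 1000000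
set_option linter.unusedSectionVars false
open Matrix Module
open scoped ComplexOrder InnerProductSpace

section aux

variable {q r s : Type*} [Fintype q] [Fintype r] [DecidableEq q] [DecidableEq r]

-- H1
lemma aux_conj_vecMulVec (M : Matrix q r ℂ) (z : r → ℂ) :
    M * vecMulVec z (star z) * Mᴴ = vecMulVec (M *ᵥ z) (star (M *ᵥ z)) := by
  ext i j
  simp only [mul_apply, vecMulVec_apply, conjTranspose_apply, mulVec, dotProduct,
    Pi.star_apply, Finset.sum_mul, Finset.mul_sum, star_sum, star_mul', RCLike.star_def]
  apply Finset.sum_congr rfl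
  intro k _
  apply Finset.sum_congr rfl
  intro t _
  ring

-- H2
lemma aux_trace_vecMulVec (u : q → ℂ) :
    (vecMulVec u (star u)).trace.re = ∑ i, ‖u i‖ ^ 2 := by
  simp only [trace, diag_apply, vecMulVec_apply, Pi.star_apply]
  rw [Complex.re_sum]
  apply Finset.sum_congr rfl
  intro i _
  rw [RCLike.star_def, Complex.mul_conj]
  simp [Complex.normSq_eq_norm_sq]
  norm_cast

end aux

lemma unitary_op_diag (p : ℕ) :
    ∀ (E : Type) (_ : NormedAddCommGroup E), ∀ (_ : InnerProductSpace ℂ E)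
    (_ : FiniteDimensional ℂ E), Module.finrank ℂ E = p →
    ∀ f : E →ₗ[ℂ] E, (∀ x y, ⟪f x, f y⟫_ℂ = ⟪x, y⟫_ℂ) →
    ∃ b : OrthonormalBasis (Fin p) ℂ E, ∀ j, ∃ c : ℂ, ‖c‖ = 1 ∧ f (b j) = c • b j := by
  induction p with
  | zero =>
    intro E _ _ _ hdim f _
    have hsub : Subsingleton E := Module.finrank_zero_iff.mp hdim
    refine ⟨OrthonormalBasis.mk (v := Fin.elim0)
      ⟨fun i => i.elim0, by intro i j _; exact i.elim0⟩ ?_, fun j => j.elim0⟩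
    intro x _
    have : x = 0 := Subsingleton.elim x 0
    simp [this]
  | succ p ih =>
    intro E _ _ _ hdim f hf
    have hnt : Nontrivial E := (Module.finrank_pos_iff (R := ℂ)).mp
      (by rw [hdim]; exact Nat.succ_pos p)
    obtain ⟨c₀, hc₀⟩ := Module.End.exists_eigenvalue f
    obtain ⟨v, hv⟩ := hc₀.exists_hasEigenvector
    have hvne : ‖v‖ ≠ 0 := norm_ne_zero_iff.mpr hv.2
    set z : E := ((‖v‖⁻¹ : ℝ) : ℂ) • (v : E) with hz
    have hfz : f z = c₀ • z := by
      rw [hz, _root_.map_smul, hv.apply_eq_smul, smul_comm]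
    have hznorm : ‖z‖ = 1 := by
      rw [hz, norm_smul]
      simp only [Complex.norm_real, norm_inv, norm_norm]
      exact inv_mul_cancel₀ hvne
    have hzne : z ≠ 0 := by
      intro h; rw [h] at hznorm; simp at hznorm
    have hc₀norm : ‖c₀‖ = 1 := by
      have h1 : ⟪f z, f z⟫_ℂ = ⟪z, z⟫_ℂ := hf z z
      rw [hfz, inner_smul_left, inner_smul_right] at h1
      have h2 : ⟪z, z⟫_ℂ = 1 := by
        rw [inner_self_eq_norm_sq_to_K, hznorm]; norm_num
      rw [h2, mul_one] at h1
      have hns : Complex.normSq c₀ = 1 := by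
        rw [mul_comm, Complex.mul_conj] at h1
        exact_mod_cast h1
      have habs : ‖c₀‖ = 1 := by
        rw [Complex.norm_def, hns, Real.sqrt_one]
      simpa using habs
    have hc₀ne : (starRingEnd ℂ) c₀ ≠ 0 := by
      simp only [ne_eq, map_eq_zero]
      intro h; rw [h] at hc₀norm; simp at hc₀norm
    set K : Submodule ℂ E := (ℂ ∙ z)ᗮ with hKdef
    haveI : Fact (Module.finrank ℂ E = p + 1) := ⟨hdim⟩
    have hKdim : Module.finrank ℂ K = p := Submodule.finrank_orthogonal_span_singleton hzne
    have hinv : ∀ x ∈ K, f x ∈ K := by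
      intro y hy
      rw [hKdef, Submodule.mem_orthogonal]
      intro u hu
      obtain ⟨a, rfl⟩ := Submodule.mem_span_singleton.mp hu
      have hzy : ⟪z, y⟫_ℂ = 0 :=
        (Submodule.mem_orthogonal _ _).mp hy z (Submodule.mem_span_singleton_self z)
      have h3 : ⟪f z, f y⟫_ℂ = 0 := by rw [hf]; exact hzy
      rw [hfz, inner_smul_left] at h3
      have h4 : ⟪z, f y⟫_ℂ = 0 := by
        rcases mul_eq_zero.mp h3 with h | h
        · exact absurd h hc₀ne
        · exact h
      rw [inner_smul_left, h4, mul_zero]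
    set g : K →ₗ[ℂ] K := f.restrict hinv with hg
    have hgc : ∀ x : K, ((g x : K) : E) = f (x : E) := fun x => rfl
    have hgi : ∀ x y : K, ⟪g x, g y⟫_ℂ = ⟪x, y⟫_ℂ := by
      intro x y
      rw [Submodule.coe_inner, Submodule.coe_inner, hgc, hgc, hf]
    obtain ⟨b', hb'⟩ := ih K inferInstance inferInstance inferInstance hKdim g hgi
    set v' : Fin (p + 1) → E := Fin.cons z (fun i => (b' i : E)) with hv'
    have hb'K : ∀ i, (b' i : E) ∈ K := fun i => (b' i).2
    have hzb : ∀ i, ⟪z, (b' i : E)⟫_ℂ = 0 := fun i =>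
      (Submodule.mem_orthogonal _ _).mp (hb'K i) z (Submodule.mem_span_singleton_self z)
    have hON : Orthonormal ℂ v' := by
      constructor
      · intro i
        refine Fin.cases ?_ ?_ i
        · simpa [hv'] using hznorm
        · intro i'
          simp only [hv', Fin.cons_succ]
          exact b'.orthonormal.1 i'
      · intro i j
        refine Fin.cases (motive := fun i => i ≠ j → ⟪v' i, v' j⟫_ℂ = 0) ?_ ?_ i
        · refine Fin.cases (motive := fun j => (0 : Fin (p+1)) ≠ j → ⟪v' 0, v' j⟫_ℂ = 0)
            ?_ ?_ j
          · intro h; exact absurd rfl h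
          · intro j' _
            simp only [hv', Fin.cons_zero, Fin.cons_succ]
            exact hzb j'
        · intro i'
          refine Fin.cases (motive := fun j => i'.succ ≠ j → ⟪v' i'.succ, v' j⟫_ℂ = 0)
            ?_ ?_ j
          · intro _
            simp only [hv', Fin.cons_zero, Fin.cons_succ]
            exact inner_eq_zero_symm.mp (hzb i')
          · intro j' h
            simp only [hv', Fin.cons_succ]
            have hne : i' ≠ j' := fun hh => h (by rw [hh])
            exact b'.orthonormal.2 hne
    have hspan : ⊤ ≤ Submodule.span ℂ (Set.range v') := by
      have h1 : Set.range v' = insert z (Set.range (fun i => (b' i : E))) := by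
        rw [hv']; exact Fin.range_cons _ _
      have h2 : Submodule.span ℂ (Set.range (fun i => (b' i : E))) = K := by
        have h3 : (Set.range (fun i => (b' i : E))) = K.subtype '' (Set.range b') := by
          rw [← Set.range_comp]; rfl
        rw [h3, Submodule.span_image]
        have h4 : Submodule.span ℂ (Set.range ⇑b') = ⊤ := by
          have := b'.toBasis.span_eq
          rwa [b'.coe_toBasis] at this
        rw [h4, Submodule.map_top, Submodule.range_subtype]
      rw [h1, Submodule.span_insert, h2]
      rw [hKdef, Submodule.sup_orthogonal_of_hasOrthogonalProjection]
    refine ⟨OrthonormalBasis.mk hON hspan, ?_⟩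
    intro j
    refine Fin.cases ?_ ?_ j
    · refine ⟨c₀, hc₀norm, ?_⟩
      simp only [OrthonormalBasis.coe_mk, hv', Fin.cons_zero]
      exact hfz
    · intro i'
      obtain ⟨c, hc1, hc2⟩ := hb' i'
      refine ⟨c, hc1, ?_⟩
      simp only [OrthonormalBasis.coe_mk, hv', Fin.cons_succ]
      rw [← hgc, hc2]
      rfl

lemma unitary_matrix_diag {r : Type} [Fintype r] [DecidableEq r] (U : Matrix r r ℂ)
    (hU : Uᴴ * U = 1) :
    ∃ (k : ℕ) (z : Fin k → r → ℂ) (lam : Fin k → ℂ),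
      (∀ j, ‖lam j‖ = 1) ∧ (∀ j, U *ᵥ z j = lam j • z j) ∧
      (∑ j, vecMulVec (z j) (star (z j))) = 1 := by
  set f := Matrix.toEuclideanLin U with hf
  have hcomp : ∀ x : EuclideanSpace ℂ r, Matrix.toEuclideanLin Uᴴ (f x) = x := by
    intro x
    simp only [hf, Matrix.toEuclideanLin_apply, Equiv.apply_symm_apply, Matrix.mulVec_mulVec,
      hU, Matrix.one_mulVec, Equiv.symm_apply_apply]
  have hfi : ∀ x y, ⟪f x, f y⟫_ℂ = ⟪x, y⟫_ℂ := by
    intro x y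
    have hadj : LinearMap.adjoint f (f y) = y := by
      rw [hf, ← Matrix.toEuclideanLin_conjTranspose_eq_adjoint]
      exact hcomp y
    conv_rhs => rw [← hadj]
    rw [LinearMap.adjoint_inner_right]
  obtain ⟨b, hb⟩ := unitary_op_diag (Module.finrank ℂ (EuclideanSpace ℂ r))
    (EuclideanSpace ℂ r) inferInstance inferInstance inferInstance rfl f hfi
  choose lam hlam1 hlam2 using hb
  refine ⟨Module.finrank ℂ (EuclideanSpace ℂ r), fun j i => b j i, lam, hlam1, ?_, ?_⟩
  · intro j
    have h1 := congrArg WithLp.ofLp (hlam2 j)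
    simp only [hf, Matrix.piLp_ofLp_toEuclideanLin, WithLp.ofLp_smul] at h1
    rw [Matrix.toLin'_apply] at h1
    funext i
    have h2 := congrFun h1 i
    simpa using h2
  · have hcard : Fintype.card r = Module.finrank ℂ (EuclideanSpace ℂ r) := by
      rw [finrank_euclideanSpace]
    have horth := orthonormal_iff_ite.mp b.orthonormal
    set Z : Matrix r (Fin (Module.finrank ℂ (EuclideanSpace ℂ r))) ℂ := fun i j => b j i with hZ
    have hZZ : Zᴴ * Z = 1 := by
      ext j j'
      have hin := horth j j'
      rw [PiLp.inner_apply] at hin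
      simp only [Matrix.mul_apply, Matrix.conjTranspose_apply, hZ, Matrix.one_apply]
      rw [← hin]
      apply Finset.sum_congr rfl
      intro t _
      simp [RCLike.inner_apply]
      exact mul_comm _ _
    have hZZ' : Z * Zᴴ = 1 :=
      (Matrix.mul_eq_one_comm_of_equiv (Fintype.equivFinOfCardEq hcard)).mpr hZZ
    ext t s
    rw [← hZZ']
    simp only [Matrix.sum_apply, Matrix.vecMulVec_apply, Pi.star_apply, Matrix.mul_apply,
      Matrix.conjTranspose_apply, hZ, RCLike.star_def]
    rfl

lemma toEuclideanLin_comp_apply {a b c : Type} [Fintype a] [Fintype b] [Fintype c]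
    [DecidableEq b] [DecidableEq c] (M : Matrix a b ℂ) (N : Matrix b c ℂ)
    (x : EuclideanSpace ℂ c) :
    Matrix.toEuclideanLin M (Matrix.toEuclideanLin N x) = Matrix.toEuclideanLin (M * N) x := by
  simp only [Matrix.toEuclideanLin_apply, Equiv.apply_symm_apply, Matrix.mulVec_mulVec]

lemma toEuclideanLin_one_apply {a : Type} [Fintype a] [DecidableEq a] (x : EuclideanSpace ℂ a) :
    Matrix.toEuclideanLin (1 : Matrix a a ℂ) x = x := by
  simp only [Matrix.toEuclideanLin_apply, Matrix.one_mulVec, Equiv.symm_apply_apply]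

lemma exists_isometry_comp {V W : Type} [NormedAddCommGroup V] [InnerProductSpace ℂ V]
    [NormedAddCommGroup W] [InnerProductSpace ℂ W] [FiniteDimensional ℂ V]
    [FiniteDimensional ℂ W] (e f : V →ₗ[ℂ] W)
    (hef : ∀ x y, ⟪e x, e y⟫_ℂ = ⟪f x, f y⟫_ℂ) :
    ∃ u : W →ₗ[ℂ] W, (∀ x y, ⟪u x, u y⟫_ℂ = ⟪x, y⟫_ℂ) ∧ ∀ x, u (e x) = f x := by
  have hker : LinearMap.ker e = LinearMap.ker f := by
    ext x
    simp only [LinearMap.mem_ker]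
    constructor
    · intro hx
      have : ⟪f x, f x⟫_ℂ = 0 := by rw [← hef, hx, inner_zero_left]
      exact inner_self_eq_zero.mp this
    · intro hx
      have : ⟪e x, e x⟫_ℂ = 0 := by rw [hef, hx, inner_zero_left]
      exact inner_self_eq_zero.mp this
  let S := LinearMap.range e
  let R := LinearMap.range f
  let φ₀ : ↥S ≃ₗ[ℂ] ↥R :=
    (e.quotKerEquivRange.symm.trans (Submodule.quotEquivOfEq _ _ hker)).trans
      f.quotKerEquivRange
  have hφ₀ : ∀ (x : V) (hm : e x ∈ S), ((φ₀ ⟨e x, hm⟩ : ↥R) : W) = f x := by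
    intro x hm
    have e1 : e.quotKerEquivRange.symm ⟨e x, hm⟩ = (LinearMap.ker e).mkQ x := by
      have := e.quotKerEquivRange_symm_apply_image x ⟨x, rfl⟩
      convert this using 2
    rw [Submodule.mkQ_apply] at e1
    show ((f.quotKerEquivRange ((Submodule.quotEquivOfEq _ _ hker)
      (e.quotKerEquivRange.symm ⟨e x, hm⟩)) : ↥R) : W) = f x
    rw [e1, Submodule.quotEquivOfEq_mk, LinearMap.quotKerEquivRange_apply_mk]
  have hφ₀inner : ∀ s t : ↥S, ⟪φ₀ s, φ₀ t⟫_ℂ = ⟪s, t⟫_ℂ := by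
    intro s t
    obtain ⟨x, hx⟩ := s.2
    obtain ⟨y, hy⟩ := t.2
    have hs : s = ⟨e x, by rw [hx]; exact s.2⟩ := by ext; exact hx.symm
    have ht : t = ⟨e y, by rw [hy]; exact t.2⟩ := by ext; exact hy.symm
    rw [hs, ht, Submodule.coe_inner, Submodule.coe_inner, hφ₀ x _, hφ₀ y _, ← hef]
  let φ : ↥S ≃ₗᵢ[ℂ] ↥R := φ₀.isometryOfInner hφ₀inner
  have hperp : Module.finrank ℂ ↥Rᗮ = Module.finrank ℂ ↥Sᗮ := by
    have h1 := Submodule.finrank_add_finrank_orthogonal (K := S)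
    have h2 := Submodule.finrank_add_finrank_orthogonal (K := R)
    have h3 : Module.finrank ℂ ↥S = Module.finrank ℂ ↥R := φ₀.finrank_eq
    omega
  let ψ : ↥Sᗮ ≃ₗᵢ[ℂ] ↥Rᗮ :=
    (stdOrthonormalBasis ℂ ↥Sᗮ).repr.trans
      ((stdOrthonormalBasis ℂ ↥Rᗮ).reindex (finCongr hperp)).repr.symm
  let u₀ : W →ₗ[ℂ] W :=
    R.subtype ∘ₗ φ.toLinearEquiv.toLinearMap ∘ₗ (Submodule.orthogonalProjectionOnto S : W →ₗ[ℂ] ↥S)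
      + Rᗮ.subtype ∘ₗ ψ.toLinearEquiv.toLinearMap ∘ₗ (Submodule.orthogonalProjectionOnto Sᗮ : W →ₗ[ℂ] ↥Sᗮ)
  have hu₀apply : ∀ v, u₀ v = (φ (Submodule.orthogonalProjectionOnto S v) : W)
      + (ψ (Submodule.orthogonalProjectionOnto Sᗮ v) : W) := by
    intro v; rfl
  refine ⟨u₀, ?_, ?_⟩
  · intro v w
    rw [hu₀apply, hu₀apply]
    rw [inner_add_left, inner_add_right, inner_add_right]
    rw [Submodule.inner_right_of_mem_orthogonal (φ (Submodule.orthogonalProjectionOnto S v)).2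
      (ψ (Submodule.orthogonalProjectionOnto Sᗮ w)).2]
    rw [Submodule.inner_left_of_mem_orthogonal (φ (Submodule.orthogonalProjectionOnto S w)).2
      (ψ (Submodule.orthogonalProjectionOnto Sᗮ v)).2]
    rw [add_zero, zero_add]
    have e1 : ⟪(φ (Submodule.orthogonalProjectionOnto S v) : W), (φ (Submodule.orthogonalProjectionOnto S w) : W)⟫_ℂ =
        ⟪((Submodule.orthogonalProjectionOnto S v : ↥S) : W), ((Submodule.orthogonalProjectionOnto S w : ↥S) : W)⟫_ℂ := by
      rw [← Submodule.coe_inner, ← Submodule.coe_inner, φ.inner_map_map]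
    have e2 : ⟪(ψ (Submodule.orthogonalProjectionOnto Sᗮ v) : W), (ψ (Submodule.orthogonalProjectionOnto Sᗮ w) : W)⟫_ℂ =
        ⟪((Submodule.orthogonalProjectionOnto Sᗮ v : ↥Sᗮ) : W),
          ((Submodule.orthogonalProjectionOnto Sᗮ w : ↥Sᗮ) : W)⟫_ℂ := by
      rw [← Submodule.coe_inner, ← Submodule.coe_inner, ψ.inner_map_map]
    rw [e1, e2]
    have hv' : ((Submodule.orthogonalProjectionOnto S v : ↥S) : W) +
        ((Submodule.orthogonalProjectionOnto Sᗮ v : ↥Sᗮ) : W) = v :=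
      Submodule.starProjection_add_starProjection_orthogonal (K := S) v
    have hw' : ((Submodule.orthogonalProjectionOnto S w : ↥S) : W) +
        ((Submodule.orthogonalProjectionOnto Sᗮ w : ↥Sᗮ) : W) = w :=
      Submodule.starProjection_add_starProjection_orthogonal (K := S) w
    conv_rhs => rw [← hv', ← hw']
    rw [inner_add_left, inner_add_right, inner_add_right]
    rw [Submodule.inner_right_of_mem_orthogonal (Submodule.orthogonalProjectionOnto S v).2
      (Submodule.orthogonalProjectionOnto Sᗮ w).2]
    rw [Submodule.inner_left_of_mem_orthogonal (Submodule.orthogonalProjectionOnto S w).2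
      (Submodule.orthogonalProjectionOnto Sᗮ v).2]
    ring
  · intro x
    have hmem : e x ∈ S := ⟨x, rfl⟩
    have hP : Submodule.orthogonalProjectionOnto S (e x) = ⟨e x, hmem⟩ := by
      ext
      exact Submodule.starProjection_eq_self_iff.mpr hmem
    have hP' : Submodule.orthogonalProjectionOnto Sᗮ (e x) = 0 :=
      Submodule.orthogonalProjectionOnto_apply_of_mem_orthogonal (S.le_orthogonal_orthogonal hmem)
    rw [hu₀apply, hP, hP', map_zero]
    simp only [Submodule.coe_zero, add_zero]
    have : φ ⟨e x, hmem⟩ = φ₀ ⟨e x, hmem⟩ := rfl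
    rw [this, hφ₀]

lemma exists_unitary_factor {q r : Type} [Fintype q] [Fintype r] [DecidableEq q] [DecidableEq r]
    (E F : Matrix q r ℂ) (h : E * Eᴴ = F * Fᴴ) :
    ∃ U : Matrix r r ℂ, Uᴴ * U = 1 ∧ E * U = F := by
  have hEF : ∀ x y, ⟪Matrix.toEuclideanLin Eᴴ x, Matrix.toEuclideanLin Eᴴ y⟫_ℂ =
      ⟪Matrix.toEuclideanLin Fᴴ x, Matrix.toEuclideanLin Fᴴ y⟫_ℂ := by
    intro x y
    have h1 : ∀ (M : Matrix q r ℂ) (x y : EuclideanSpace ℂ q),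
        ⟪Matrix.toEuclideanLin Mᴴ x, Matrix.toEuclideanLin Mᴴ y⟫_ℂ =
        ⟪x, Matrix.toEuclideanLin (M * Mᴴ) y⟫_ℂ := by
      intro M x y
      rw [← toEuclideanLin_comp_apply]
      rw [Matrix.toEuclideanLin_conjTranspose_eq_adjoint]
      rw [LinearMap.adjoint_inner_left]
    rw [h1, h1, h]
  obtain ⟨u₀, hu₀inner, hu₀e⟩ :=
    exists_isometry_comp (Matrix.toEuclideanLin Eᴴ) (Matrix.toEuclideanLin Fᴴ) hEF
  have hadj : ∀ w, LinearMap.adjoint u₀ (u₀ w) = w := by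
    intro w
    apply ext_inner_left ℂ
    intro v
    rw [LinearMap.adjoint_inner_right]
    exact hu₀inner v w
  set U₀ := Matrix.toEuclideanLin.symm u₀ with hU₀def
  have hU₀ : Matrix.toEuclideanLin U₀ = u₀ := Matrix.toEuclideanLin.apply_symm_apply u₀
  have claim1 : U₀ᴴ * U₀ = 1 := by
    apply Matrix.toEuclideanLin.injective
    apply LinearMap.ext
    intro x
    rw [← toEuclideanLin_comp_apply, hU₀, Matrix.toEuclideanLin_conjTranspose_eq_adjoint, hU₀]
    rw [toEuclideanLin_one_apply]
    exact hadj x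
  have claim2 : U₀ * Eᴴ = Fᴴ := by
    apply Matrix.toEuclideanLin.injective
    apply LinearMap.ext
    intro x
    rw [← toEuclideanLin_comp_apply, hU₀]
    exact hu₀e x
  refine ⟨U₀ᴴ, ?_, ?_⟩
  · rw [Matrix.conjTranspose_conjTranspose]
    exact mul_eq_one_comm.mp claim1
  · have := congrArg Matrix.conjTranspose claim2
    rwa [Matrix.conjTranspose_mul, Matrix.conjTranspose_conjTranspose,
      Matrix.conjTranspose_conjTranspose] at this


section helpers
lemma vecMulVec_star_posSemidef {ι : Type*} [Fintype ι] (v : ι → ℂ) :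
    (vecMulVec v (star v)).PosSemidef := by
  have h : vecMulVec v (star v) = (Matrix.replicateRow Unit (star v))ᴴ * Matrix.replicateRow Unit (star v) := by
    ext i j
    simp [vecMulVec_apply, Matrix.mul_apply, Matrix.replicateRow_apply, Matrix.conjTranspose_apply]
  rw [h]
  exact Matrix.posSemidef_conjTranspose_mul_self _
end helpers

open scoped MatrixOrder in
lemma psd_sqrt_exists {ι : Type*} [Fintype ι] [DecidableEq ι] (V : Matrix ι ι ℂ)
    (hV : V.PosSemidef) : ∃ T : Matrix ι ι ℂ, T * T = V ∧ Tᴴ = T :=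
  ⟨CFC.sqrt V, CFC.sqrt_mul_sqrt_self V hV.nonneg, (CFC.sqrt_nonneg V).posSemidef.isHermitian⟩

/-- The SDP optimal value `μ_opt` is attained by a single-frequency sinusoidal
input: there are `w` with `‖w‖ ≤ 1` and `θ ∈ ℝ` such that with
`x = (e^{iθ}I − A)⁻¹ B w`, `‖Cx + Dw‖² = μ_opt`. -/
theorem sdp_value_attained_by_sinusoid
    (n m l : ℕ) (A : Matrix (Fin n) (Fin n) ℂ) (B : Matrix (Fin n) (Fin m) ℂ)
    (C : Matrix (Fin l) (Fin n) ℂ) (D : Matrix (Fin l) (Fin m) ℂ)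
    (hA : ∀ μ ∈ spectrum ℂ A, ‖μ‖ < 1)
    (μopt : ℝ)
    (hopt : IsGreatest {r : ℝ | ∃ V : Matrix (Fin n ⊕ Fin m) (Fin n ⊕ Fin m) ℂ,
        V.PosSemidef ∧
        (Matrix.fromCols (1 : Matrix (Fin n) (Fin n) ℂ) (0 : Matrix (Fin n) (Fin m) ℂ)) * V *
            (Matrix.fromCols (1 : Matrix (Fin n) (Fin n) ℂ) (0 : Matrix (Fin n) (Fin m) ℂ))ᴴ =
          (Matrix.fromCols A B) * V * (Matrix.fromCols A B)ᴴ ∧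
        ((Matrix.fromCols (0 : Matrix (Fin m) (Fin n) ℂ) (1 : Matrix (Fin m) (Fin m) ℂ)) * V *
            (Matrix.fromCols (0 : Matrix (Fin m) (Fin n) ℂ) (1 : Matrix (Fin m) (Fin m) ℂ))ᴴ).trace.re ≤ 1 ∧
        r = (Matrix.fromCols C D * V * (Matrix.fromCols C D)ᴴ).trace.re} μopt) :
    ∃ (w : Fin m → ℂ) (θ : ℝ),
      (∑ i, ‖w i‖ ^ 2) ≤ 1 ∧
      (∑ i, ‖(C *ᵥ ((Complex.exp (θ * Complex.I) • (1 : Matrix (Fin n) (Fin n) ℂ) - A)⁻¹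
          *ᵥ (B *ᵥ w)) + D *ᵥ w) i‖ ^ 2) = μopt := by
  classical
  obtain ⟨⟨V, hV, hcon, htr, hobj⟩, hub⟩ := hopt
  -- nonnegativity of μopt
  have hge0 : (0 : ℝ) ≤ μopt := by
    apply hub
    refine ⟨0, ⟨Matrix.isHermitian_zero, fun x => by simp [Matrix.zero_mulVec]⟩, by simp, by simp,
      by simp⟩
  -- invertibility of lam • 1 - A for |lam| = 1
  have hInv : ∀ lam : ℂ, ‖lam‖ = 1 →
      IsUnit ((lam • (1 : Matrix (Fin n) (Fin n) ℂ) - A).det) := by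
    intro lam hlam
    by_contra hdet
    have hmem : lam ∈ spectrum ℂ A := by
      rw [spectrum.mem_iff, Algebra.algebraMap_eq_smul_one, Matrix.isUnit_iff_isUnit_det]
      exact hdet
    have := hA lam hmem
    rw [hlam] at this
    exact lt_irrefl 1 this
  have hMinv : ∀ (lam : ℂ), ‖lam‖ = 1 → ∀ (u : Fin n → ℂ),
      (lam • (1 : Matrix (Fin n) (Fin n) ℂ) - A) *ᵥ
        ((lam • (1 : Matrix (Fin n) (Fin n) ℂ) - A)⁻¹ *ᵥ u) = u := by
    intro lam hlam u
    rw [Matrix.mulVec_mulVec, Matrix.mul_nonsing_inv _ (hInv lam hlam), Matrix.one_mulVec]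
  have hxrel : ∀ (lam : ℂ), ‖lam‖ = 1 → ∀ (x : Fin n → ℂ) (w : Fin m → ℂ),
      A *ᵥ x + B *ᵥ w = lam • x →
      x = (lam • (1 : Matrix (Fin n) (Fin n) ℂ) - A)⁻¹ *ᵥ (B *ᵥ w) := by
    intro lam hlam x w hrel
    have hM : (lam • (1 : Matrix (Fin n) (Fin n) ℂ) - A) *ᵥ x = B *ᵥ w := by
      rw [Matrix.sub_mulVec, Matrix.smul_mulVec, Matrix.one_mulVec, ← hrel]
      abel
    calc x = ((lam • (1 : Matrix (Fin n) (Fin n) ℂ) - A)⁻¹ *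
          (lam • (1 : Matrix (Fin n) (Fin n) ℂ) - A)) *ᵥ x := by
          rw [Matrix.nonsing_inv_mul _ (hInv lam hlam), Matrix.one_mulVec]
      _ = (lam • (1 : Matrix (Fin n) (Fin n) ℂ) - A)⁻¹ *ᵥ
          ((lam • (1 : Matrix (Fin n) (Fin n) ℂ) - A) *ᵥ x) := by
          rw [Matrix.mulVec_mulVec]
      _ = _ := by rw [hM]
  -- feasibility of each sinusoid
  have hfeas : ∀ (w : Fin m → ℂ) (θ : ℝ), (∑ i, ‖w i‖ ^ 2) ≤ 1 →
      (∑ i, ‖(C *ᵥ ((Complex.exp (θ * Complex.I) • (1 : Matrix (Fin n) (Fin n) ℂ) - A)⁻¹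
          *ᵥ (B *ᵥ w)) + D *ᵥ w) i‖ ^ 2) ≤ μopt := by
    intro w θ hw
    set lam : ℂ := Complex.exp (θ * Complex.I) with hlamdef
    have hlam : ‖lam‖ = 1 := by
      rw [hlamdef, Complex.norm_exp]
      simp
    set x : Fin n → ℂ := (lam • (1 : Matrix (Fin n) (Fin n) ℂ) - A)⁻¹ *ᵥ (B *ᵥ w) with hxdef
    set v : Fin n ⊕ Fin m → ℂ := Sum.elim x w with hvdef
    apply hub
    refine ⟨vecMulVec v (star v), vecMulVec_star_posSemidef v, ?_, ?_, ?_⟩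
    · rw [aux_conj_vecMulVec, aux_conj_vecMulVec]
      have h1 : Matrix.fromCols (1 : Matrix (Fin n) (Fin n) ℂ) 0 *ᵥ v = x := by
        rw [hvdef, Matrix.fromCols_mulVec_sumElim, Matrix.one_mulVec, Matrix.zero_mulVec,
          add_zero]
      have h2 : Matrix.fromCols A B *ᵥ v = lam • x := by
        rw [hvdef, Matrix.fromCols_mulVec_sumElim]
        have hBw : B *ᵥ w = (lam • (1 : Matrix (Fin n) (Fin n) ℂ) - A) *ᵥ x := by
          rw [hxdef, hMinv lam hlam]
        rw [hBw, Matrix.sub_mulVec, Matrix.smul_mulVec, Matrix.one_mulVec]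
        abel
      rw [h1, h2]
      ext i j
      simp only [vecMulVec_apply, Pi.star_apply, Pi.smul_apply, smul_eq_mul, star_mul',
        RCLike.star_def]
      have : lam * (starRingEnd ℂ) lam = 1 := by
        rw [Complex.mul_conj]
        norm_cast
        rw [← Complex.sq_norm]
        rw [hlam]; norm_num
      calc x i * ((starRingEnd ℂ) (x j))
          = (lam * (starRingEnd ℂ) lam) * (x i * (starRingEnd ℂ) (x j)) := by rw [this]; ring
        _ = lam * x i * ((starRingEnd ℂ) lam * (starRingEnd ℂ) (x j)) := by ring
    · rw [aux_conj_vecMulVec]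
      have h3 : Matrix.fromCols (0 : Matrix (Fin m) (Fin n) ℂ) 1 *ᵥ v = w := by
        rw [hvdef, Matrix.fromCols_mulVec_sumElim, Matrix.one_mulVec, Matrix.zero_mulVec,
          zero_add]
      rw [h3, aux_trace_vecMulVec]
      exact hw
    · rw [aux_conj_vecMulVec]
      have h4 : Matrix.fromCols C D *ᵥ v = C *ᵥ x + D *ᵥ w := by
        rw [hvdef, Matrix.fromCols_mulVec_sumElim]
      rw [h4, aux_trace_vecMulVec]
  -- decomposition of the optimal V into sinusoids
  obtain ⟨T, hT, hTH⟩ := psd_sqrt_exists V hV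
  have hgram : (Matrix.fromCols (1 : Matrix (Fin n) (Fin n) ℂ)
        (0 : Matrix (Fin n) (Fin m) ℂ) * T) *
      (Matrix.fromCols (1 : Matrix (Fin n) (Fin n) ℂ)
        (0 : Matrix (Fin n) (Fin m) ℂ) * T)ᴴ =
      (Matrix.fromCols A B * T) * (Matrix.fromCols A B * T)ᴴ := by
    have e : ∀ (M : Matrix (Fin n) (Fin n ⊕ Fin m) ℂ), (M * T) * (M * T)ᴴ = M * V * Mᴴ := by
      intro M
      rw [Matrix.conjTranspose_mul, hTH]
      calc M * T * (T * Mᴴ) = M * (T * (T * Mᴴ)) := by rw [Matrix.mul_assoc]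
        _ = M * (T * T * Mᴴ) := by rw [Matrix.mul_assoc]
        _ = M * V * Mᴴ := by rw [hT, Matrix.mul_assoc]
    rw [e, e, hcon]
  obtain ⟨U, hU1, hUE⟩ := exists_unitary_factor _ _ hgram
  obtain ⟨k, z, lam, hlam1, hlam2, hsum⟩ := unitary_matrix_diag U hU1
  set xv : Fin k → Fin n → ℂ := fun j i => (T *ᵥ z j) (Sum.inl i) with hxv
  set wv : Fin k → Fin m → ℂ := fun j i => (T *ᵥ z j) (Sum.inr i) with hwv
  have helim : ∀ j, Sum.elim (xv j) (wv j) = T *ᵥ z j := by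
    intro j; funext i; cases i <;> rfl
  have hVdec : V = ∑ j, vecMulVec (T *ᵥ z j) (star (T *ᵥ z j)) := by
    have h0 : V = T * (∑ j, vecMulVec (z j) (star (z j))) * T := by
      rw [hsum, Matrix.mul_one, hT]
    rw [h0, Matrix.mul_sum, Matrix.sum_mul]
    refine Finset.sum_congr rfl fun j _ => ?_
    have h1 := aux_conj_vecMulVec T (z j)
    rw [hTH] at h1
    exact h1
  have hsin : ∀ j, A *ᵥ xv j + B *ᵥ wv j = lam j • xv j := by
    intro j
    have h1 : (Matrix.fromCols A B) *ᵥ (T *ᵥ z j) =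
        lam j • ((Matrix.fromCols (1 : Matrix (Fin n) (Fin n) ℂ)
          (0 : Matrix (Fin n) (Fin m) ℂ)) *ᵥ (T *ᵥ z j)) := by
      rw [Matrix.mulVec_mulVec, Matrix.mulVec_mulVec, ← hUE, ← Matrix.mulVec_mulVec,
        hlam2 j, Matrix.mulVec_smul]
    rw [← helim j] at h1
    rw [Matrix.fromCols_mulVec_sumElim, Matrix.fromCols_mulVec_sumElim,
      Matrix.one_mulVec, Matrix.zero_mulVec, add_zero] at h1
    exact h1
  have htrdec : ∀ (s : ℕ) (M : Matrix (Fin s) (Fin n ⊕ Fin m) ℂ),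
      (M * V * Mᴴ).trace.re = ∑ j, ∑ i, ‖(M *ᵥ (T *ᵥ z j)) i‖ ^ 2 := by
    intro s M
    rw [hVdec, Matrix.mul_sum, Matrix.sum_mul, Matrix.trace_sum, Complex.re_sum]
    refine Finset.sum_congr rfl fun j _ => ?_
    rw [aux_conj_vecMulVec, aux_trace_vecMulVec]
  set Sv : Fin k → ℝ := fun j => ∑ i, ‖wv j i‖ ^ 2 with hSv
  set Ov : Fin k → ℝ := fun j => ∑ i, ‖(C *ᵥ xv j + D *ᵥ wv j) i‖ ^ 2 with hOv
  have hwvj : ∀ j, (Matrix.fromCols (0 : Matrix (Fin m) (Fin n) ℂ) 1) *ᵥ (T *ᵥ z j)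
      = wv j := by
    intro j
    rw [← helim j, Matrix.fromCols_mulVec_sumElim, Matrix.one_mulVec, Matrix.zero_mulVec,
      zero_add]
  have hcdj : ∀ j, (Matrix.fromCols C D) *ᵥ (T *ᵥ z j) = C *ᵥ xv j + D *ᵥ wv j := by
    intro j
    rw [← helim j, Matrix.fromCols_mulVec_sumElim]
  have htr' : ∑ j, Sv j ≤ 1 := by
    calc ∑ j, Sv j
        = ((Matrix.fromCols (0 : Matrix (Fin m) (Fin n) ℂ) (1 : Matrix (Fin m) (Fin m) ℂ)) * V *
            (Matrix.fromCols (0 : Matrix (Fin m) (Fin n) ℂ) (1 : Matrix (Fin m) (Fin m) ℂ))ᴴ).trace.re := by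
          rw [htrdec m]
          exact Finset.sum_congr rfl fun j _ => by rw [hwvj j]
      _ ≤ 1 := htr
  have hobj' : ∑ j, Ov j = μopt := by
    rw [hobj, htrdec l]
    exact Finset.sum_congr rfl fun j _ => by rw [hcdj j]
  have hSnn : ∀ j, 0 ≤ Sv j := fun j => Finset.sum_nonneg fun i _ => by positivity
  have hOnn : ∀ j, 0 ≤ Ov j := fun j => Finset.sum_nonneg fun i _ => by positivity
  have hOzero : ∀ j, Sv j = 0 → Ov j = 0 := by
    intro j hS
    have hwz : wv j = 0 := by
      funext i
      have h0 : ‖wv j i‖ ^ 2 = 0 :=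
        (Finset.sum_eq_zero_iff_of_nonneg (fun i _ => by positivity)).mp hS i (Finset.mem_univ i)
      have h1 : ‖wv j i‖ = 0 := by
        nlinarith [norm_nonneg (wv j i)]
      simpa using h1
    have hxz : xv j = 0 := by
      have h2 := hxrel (lam j) (hlam1 j) (xv j) (wv j) (hsin j)
      rw [hwz] at h2
      simpa [Matrix.mulVec_zero] using h2
    rw [hOv]
    simp [hxz, hwz, Matrix.mulVec_zero]
  by_cases hzero : μopt = 0
  · refine ⟨0, 0, by norm_num, ?_⟩
    simp [Matrix.mulVec_zero, hzero]
  · have hpos : 0 < μopt := lt_of_le_of_ne hge0 (Ne.symm hzero)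
    have hsel : ∃ j, Sv j ≠ 0 ∧ μopt * Sv j ≤ Ov j := by
      by_contra hno
      push_neg at hno
      have hno' : ∀ j, Ov j ≤ μopt * Sv j := by
        intro j
        by_cases hS : Sv j = 0
        · rw [hOzero j hS, hS, mul_zero]
        · exact (hno j hS).le
      have hex : ∃ j, 0 < Ov j := by
        by_contra hax
        push_neg at hax
        have h3 : ∑ j, Ov j ≤ 0 := Finset.sum_nonpos fun j _ => hax j
        rw [hobj'] at h3
        linarith
      obtain ⟨j₀, hj₀⟩ := hex
      have hSne : Sv j₀ ≠ 0 := by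
        intro h
        rw [hOzero j₀ h] at hj₀
        exact lt_irrefl 0 hj₀
      have hstrict : Ov j₀ < μopt * Sv j₀ := hno j₀ hSne
      have hlt : ∑ j, Ov j < ∑ j, μopt * Sv j :=
        Finset.sum_lt_sum (fun j _ => hno' j) ⟨j₀, Finset.mem_univ j₀, hstrict⟩
      rw [hobj', ← Finset.mul_sum] at hlt
      have h4 : μopt * ∑ j, Sv j ≤ μopt * 1 := mul_le_mul_of_nonneg_left htr' hge0
      linarith
    obtain ⟨j, hSne, hOge⟩ := hsel
    have hSpos : 0 < Sv j := (hSnn j).lt_of_ne (Ne.symm hSne)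
    set c : ℝ := (Real.sqrt (Sv j))⁻¹ with hc
    have hcpos : 0 < c := by
      rw [hc]
      exact inv_pos.mpr (Real.sqrt_pos.mpr hSpos)
    have hc2 : c ^ 2 * Sv j = 1 := by
      rw [hc, inv_pow, Real.sq_sqrt hSpos.le]
      exact inv_mul_cancel₀ hSne
    set θ : ℝ := (lam j).arg with hθ
    have hexp : Complex.exp (θ * Complex.I) = lam j := by
      have h5 := Complex.norm_mul_exp_arg_mul_I (lam j)
      have h6 : ((‖lam j‖ : ℝ) : ℂ) = 1 := by
        have := hlam1 j
        rw [this]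
        norm_num
      rw [h6, one_mul] at h5
      exact h5
    have hnorm1 : (∑ i, ‖(((c : ℝ) : ℂ) • wv j) i‖ ^ 2) = 1 := by
      have h7 : ∀ i, ‖(((c : ℝ) : ℂ) • wv j) i‖ ^ 2 = c ^ 2 * ‖wv j i‖ ^ 2 := by
        intro i
        simp only [Pi.smul_apply, norm_smul, Complex.norm_real, mul_pow]
        rw [Real.norm_eq_abs, abs_of_nonneg hcpos.le]
      rw [Finset.sum_congr rfl fun i _ => h7 i, ← Finset.mul_sum]
      exact hc2
    refine ⟨((c : ℝ) : ℂ) • wv j, θ, hnorm1.le, ?_⟩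
    have hle := hfeas (((c : ℝ) : ℂ) • wv j) θ hnorm1.le
    have hx' : (Complex.exp (θ * Complex.I) • (1 : Matrix (Fin n) (Fin n) ℂ) - A)⁻¹
        *ᵥ (B *ᵥ (((c : ℝ) : ℂ) • wv j)) = ((c : ℝ) : ℂ) • xv j := by
      rw [hexp, Matrix.mulVec_smul, Matrix.mulVec_smul]
      congr 1
      exact (hxrel (lam j) (hlam1 j) (xv j) (wv j) (hsin j)).symm
    have hveq : (∑ i, ‖(C *ᵥ ((Complex.exp (θ * Complex.I) •
        (1 : Matrix (Fin n) (Fin n) ℂ) - A)⁻¹ *ᵥ (B *ᵥ (((c : ℝ) : ℂ) • wv j)))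
        + D *ᵥ (((c : ℝ) : ℂ) • wv j)) i‖ ^ 2) = c ^ 2 * Ov j := by
      rw [hx']
      have h8 : ∀ i, (C *ᵥ (((c : ℝ) : ℂ) • xv j) + D *ᵥ (((c : ℝ) : ℂ) • wv j)) i =
          ((c : ℝ) : ℂ) * ((C *ᵥ xv j + D *ᵥ wv j) i) := by
        intro i
        rw [Matrix.mulVec_smul, Matrix.mulVec_smul]
        simp only [Pi.add_apply, Pi.smul_apply, smul_eq_mul]
        ring
      have h9 : ∀ i, ‖(C *ᵥ (((c : ℝ) : ℂ) • xv j) + D *ᵥ (((c : ℝ) : ℂ) • wv j)) i‖ ^ 2 =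
          c ^ 2 * ‖(C *ᵥ xv j + D *ᵥ wv j) i‖ ^ 2 := by
        intro i
        rw [h8, norm_mul, Complex.norm_real, Real.norm_eq_abs, abs_of_nonneg hcpos.le, mul_pow]
      rw [Finset.sum_congr rfl fun i _ => h9 i, ← Finset.mul_sum]
    rw [hveq] at hle ⊢
    have hge : μopt ≤ c ^ 2 * Ov j := by
      calc μopt = μopt * (c ^ 2 * Sv j) := by rw [hc2, mul_one]
        _ = c ^ 2 * (μopt * Sv j) := by ring
        _ ≤ c ^ 2 * Ov j := mul_le_mul_of_nonneg_left hOge (sq_nonneg c)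
    linarith
end
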